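/- One-step identity for quasi-Newton with stepsize 1/2: let K ∈ S with value matrix X such that P := R + Bᵀ X B is invertible, and set K' = K − P^{-1} N where N = RK − Bᵀ X A_K. If K' ∈ S with value matrix X', then X − X' = A_{K'}ᵀ (X − X') A_{K'} + Nᵀ P^{-1} N; in particular if P ≻ 0 then X ⪰ X'. -/

import Mathlib

open Matrix
open scoped ENNReal

/-- Spectral radius of a real square matrix, computed over ℂ. -/
noncomputable def specRad {n : ℕ} (A : Matrix (Fin n) (Fin n) ℝ) : ℝ≥0∞ :=
  spectralRadius ℂ (A.map Complex.ofReal)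

/-- A real square matrix is Schur stable if its spectral radius is `< 1`. -/
def IsSchur {n : ℕ} (A : Matrix (Fin n) (Fin n) ℝ) : Prop := specRad A < 1

open Filter

attribute [local instance] Matrix.linftyOpNormedRing Matrix.linftyOpNormedAlgebra

lemma schur_norm_pow_tendsto {n : ℕ} {M : Matrix (Fin n) (Fin n) ℝ} (h : IsSchur M) :
    Tendsto (fun k => ‖(M.map Complex.ofReal) ^ k‖) atTop (nhds 0) := by
  set Mc := M.map Complex.ofReal with hMc
  have hG := spectrum.pow_nnnorm_pow_one_div_tendsto_nhds_spectralRadius Mc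
  obtain ⟨r, hr1, hr2⟩ := exists_between (h : spectralRadius ℂ Mc < 1)
  have hrt : r ≠ ∞ := (hr2.trans_le le_top).ne
  have hev : ∀ᶠ k : ℕ in atTop, ((‖Mc ^ k‖₊ : ℝ≥0∞) ^ (1 / (k:ℝ))) < r := hG.eventually_lt_const hr1
  have hbound : ∀ᶠ k in atTop, ‖Mc ^ k‖ ≤ r.toReal ^ k := by
    filter_upwards [hev, eventually_ge_atTop 1] with k hk hk1
    have hk0 : (k : ℝ) ≠ 0 := Nat.cast_ne_zero.mpr (by omega)
    have h1 : (‖Mc ^ k‖₊ : ℝ≥0∞) < r ^ k := by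
      have := ENNReal.rpow_lt_rpow hk (by positivity : (0:ℝ) < (k:ℝ))
      rwa [← ENNReal.rpow_mul, one_div, inv_mul_cancel₀ hk0, ENNReal.rpow_one,
        ENNReal.rpow_natCast] at this
    have h2 := ENNReal.toReal_mono (by simp [ENNReal.pow_ne_top hrt]) h1.le
    simpa [ENNReal.toReal_pow] using h2
  have hr01 : r.toReal < 1 := by
    rw [← ENNReal.toReal_one]
    exact ENNReal.toReal_strict_mono (by simp) hr2
  have hgeo : Tendsto (fun k : ℕ => r.toReal ^ k) atTop (nhds 0) :=
    tendsto_pow_atTop_nhds_zero_of_lt_one ENNReal.toReal_nonneg hr01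
  exact squeeze_zero' (Eventually.of_forall fun _ => norm_nonneg _) hbound hgeo

lemma schur_mulVec_tendsto {n : ℕ} {M : Matrix (Fin n) (Fin n) ℝ} (h : IsSchur M)
    (v : Fin n → ℝ) : Tendsto (fun k => (M ^ k) *ᵥ v) atTop (nhds 0) := by
  have hnorm := schur_norm_pow_tendsto h
  set vc : Fin n → ℂ := fun i => (v i : ℂ) with hvc
  rw [tendsto_zero_iff_norm_tendsto_zero]
  have hb : ∀ k, ‖(M ^ k) *ᵥ v‖ ≤ ‖(M.map Complex.ofReal) ^ k‖ * ‖vc‖ := by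
    intro k
    have key : ∀ i, ((((M ^ k) *ᵥ v) i : ℝ) : ℂ) = (((M.map Complex.ofReal) ^ k) *ᵥ vc) i := by
      intro i
      have hmap : (M.map Complex.ofReal) ^ k = (M ^ k).map Complex.ofReal := by
        exact (map_pow (Complex.ofRealHom.mapMatrix) M k).symm
      rw [hmap]
      simp [Matrix.mulVec, dotProduct, hvc]
    refine (pi_norm_le_iff_of_nonneg (by positivity)).2 fun i => ?_
    calc ‖((M ^ k) *ᵥ v) i‖ = ‖((((M ^ k) *ᵥ v) i : ℝ) : ℂ)‖ := by simp
      _ = ‖(((M.map Complex.ofReal) ^ k) *ᵥ vc) i‖ := by rw [key i]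
      _ ≤ ‖(((M.map Complex.ofReal) ^ k) *ᵥ vc)‖ := norm_le_pi_norm _ i
      _ ≤ ‖(M.map Complex.ofReal) ^ k‖ * ‖vc‖ := Matrix.linfty_opNorm_mulVec _ _
  have hlim : Tendsto (fun k => ‖(M.map Complex.ofReal) ^ k‖ * ‖vc‖) atTop (nhds 0) := by
    simpa using hnorm.mul_const ‖vc‖
  exact squeeze_zero (fun _ => norm_nonneg _) hb hlim

lemma psd_of_lyap {n : ℕ} {M S C : Matrix (Fin n) (Fin n) ℝ} (hM : IsSchur M) (hSym : Sᵀ = S)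
    (hC : C.PosSemidef) (hEq : S = Mᵀ * S * M + C) : S.PosSemidef := by
  rw [Matrix.posSemidef_iff_dotProduct_mulVec]
  constructor
  · rw [Matrix.IsHermitian]
    simpa using hSym
  · intro v
    simp only [RCLike.re_to_real, star_trivial]
    set g : ℕ → ℝ := fun k => ((M ^ k) *ᵥ v) ⬝ᵥ (S *ᵥ ((M ^ k) *ᵥ v)) with hg
    have hstep : ∀ k, g (k + 1) ≤ g k := by
      intro k
      have : g k = g (k + 1) + ((M ^ k) *ᵥ v) ⬝ᵥ (C *ᵥ ((M ^ k) *ᵥ v)) := by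
        simp only [hg]
        nth_rewrite 1 [hEq]
        rw [Matrix.add_mulVec, dotProduct_add]
        congr 1
        rw [pow_succ', ← Matrix.mulVec_mulVec, ← Matrix.mulVec_mulVec,
          Matrix.dotProduct_mulVec _ Mᵀ, Matrix.vecMul_transpose, Matrix.mulVec_mulVec,
          Matrix.mulVec_mulVec]
      rw [this]
      have := hC.dotProduct_mulVec_nonneg ((M ^ k) *ᵥ v)
      simp only [RCLike.re_to_real, star_trivial] at this
      linarith
    have hmono : ∀ k, g k ≤ g 0 := by
      intro k
      induction k with
      | zero => exact le_refl _
      | succ k ih => exact (hstep k).trans ih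
    have hcont : Continuous fun u : Fin n → ℝ => u ⬝ᵥ (S *ᵥ u) := by
      simp only [dotProduct, Matrix.mulVec]
      fun_prop
    have hlim : Tendsto g atTop (nhds 0) := by
      have h0 : ((0 : Fin n → ℝ)) ⬝ᵥ (S *ᵥ 0) = 0 := by simp
      have := (hcont.tendsto 0).comp (schur_mulVec_tendsto hM v)
      rw [h0] at this
      exact this
    have h0le : 0 ≤ g 0 := le_of_tendsto' hlim hmono
    simpa [hg, Matrix.one_mulVec] using h0le


/-- One-step identity for the quasi-Newton update with stepsize `1/2`:
`K' = K − P⁻¹N` with `P = R + BᵀXB`, giving `X − X' = A_K'ᵀ(X − X')A_K' + NᵀP⁻¹N`;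
in particular `X ⪰ X'` when `P ≻ 0`. -/
theorem stmt15 {n m : ℕ} (A : Matrix (Fin n) (Fin n) ℝ) (B : Matrix (Fin n) (Fin m) ℝ)
    (Q : Matrix (Fin n) (Fin n) ℝ) (R : Matrix (Fin m) (Fin m) ℝ)
    (hQ : Qᵀ = Q) (hR : Rᵀ = R)
    (K : Matrix (Fin m) (Fin n) ℝ) (X : Matrix (Fin n) (Fin n) ℝ)
    (hX : Xᵀ = X) (hS : IsSchur (A - B * K))
    (hLyap : (A - B * K)ᵀ * X * (A - B * K) + Q + Kᵀ * R * K = X)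
    (N : Matrix (Fin m) (Fin n) ℝ) (hN : N = R * K - Bᵀ * X * (A - B * K))
    (hP : IsUnit (R + Bᵀ * X * B))
    (K' : Matrix (Fin m) (Fin n) ℝ) (hK' : K' = K - (R + Bᵀ * X * B)⁻¹ * N)
    (X' : Matrix (Fin n) (Fin n) ℝ)
    (hX' : X'ᵀ = X') (hS' : IsSchur (A - B * K'))
    (hLyap' : (A - B * K')ᵀ * X' * (A - B * K') + Q + K'ᵀ * R * K' = X') :
    X - X' = (A - B * K')ᵀ * (X - X') * (A - B * K')
        + Nᵀ * (R + Bᵀ * X * B)⁻¹ * N ∧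
    ((R + Bᵀ * X * B).PosDef → (X - X').PosSemidef) := by
  have hdet : IsUnit (R + Bᵀ * X * B).det := (Matrix.isUnit_iff_isUnit_det _).mp hP
  set D := (R + Bᵀ * X * B)⁻¹ * N with hD
  have hPD : (R + Bᵀ * X * B) * D = N := by
    rw [hD, ← Matrix.mul_assoc, Matrix.mul_nonsing_inv _ hdet, Matrix.one_mul]
  have hPt : (R + Bᵀ * X * B)ᵀ = R + Bᵀ * X * B := by
    simp [Matrix.transpose_add, Matrix.transpose_mul, Matrix.transpose_transpose, hR, hX,
      Matrix.mul_assoc]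
  have hPit : ((R + Bᵀ * X * B)⁻¹)ᵀ = (R + Bᵀ * X * B)⁻¹ := by
    rw [Matrix.transpose_nonsing_inv, hPt]
  have hident : X - X' = (A - B * K')ᵀ * (X - X') * (A - B * K')
      + (Dᵀ * N + Nᵀ * D - Dᵀ * (R + Bᵀ * X * B) * D) := by
    nth_rewrite 1 [← hLyap]
    nth_rewrite 1 [← hLyap']
    rw [hK', hN]
    simp only [sub_eq_add_neg, transpose_add, transpose_neg, transpose_mul, transpose_transpose,
      hR, hX, hQ, Matrix.add_mul, Matrix.mul_add, Matrix.neg_mul, Matrix.mul_neg, neg_add,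
      neg_neg, Matrix.mul_assoc]
    abel
  have hsum : Dᵀ * N + Nᵀ * D - Dᵀ * (R + Bᵀ * X * B) * D
      = Nᵀ * (R + Bᵀ * X * B)⁻¹ * N := by
    have h1 : Dᵀ * (R + Bᵀ * X * B) * D = Dᵀ * N := by rw [Matrix.mul_assoc, hPD]
    have h2 : Dᵀ * N = Nᵀ * (R + Bᵀ * X * B)⁻¹ * N := by
      rw [hD, Matrix.transpose_mul, hPit, Matrix.mul_assoc]
    have h3 : Nᵀ * D = Nᵀ * (R + Bᵀ * X * B)⁻¹ * N := by
      rw [hD]; exact (Matrix.mul_assoc _ _ _).symm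
    rw [h1, h2, h3]; abel
  have hfirst : X - X' = (A - B * K')ᵀ * (X - X') * (A - B * K')
      + Nᵀ * (R + Bᵀ * X * B)⁻¹ * N := hident.trans (by rw [hsum])
  refine ⟨hfirst, fun hpos => ?_⟩
  have hC : (Nᵀ * (R + Bᵀ * X * B)⁻¹ * N).PosSemidef := by
    have := (hpos.inv.posSemidef).conjTranspose_mul_mul_same N
    rwa [Matrix.conjTranspose_eq_transpose_of_trivial] at this
  exact psd_of_lyap hS' (by simp [Matrix.transpose_sub, hX, hX']) hC hfirst
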